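/- Time-averaged convergence of a quantum walk (Aharonov–Ambainis–Kempe–Vazirani Lemma 4.3, continuous-time version): let H be a Hermitian N×N matrix with orthonormal eigenbasis {φ^{(j)}} and eigenvalues {λ_j}, and let p_τ(m|c) = |⟨m| e^{-iHτ} |c⟩|², π(m|c) = ∑_{(j,k): λ_j = λ_k} φ^{(j)}_m \overline{φ^{(j)}_c} \overline{φ^{(k)}_m} φ^{(k)}_c. Then for any T > 0, ∑_{m=1}^{N} | (1/T)∫_0^T p_τ(m|c) dτ − π(m|c) | ≤ (2/T) ∑_{(j,k): λ_j ≠ λ_k} |φ^{(j)}_c|² / |λ_j − λ_k|. -/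

import Mathlib

open Complex
open Matrix

lemma exp_entry_aux (N : ℕ) (lam : Fin N → ℝ) (φ : Fin N → Fin N → ℂ)
    (horth : ∀ j k : Fin N,
      ∑ m : Fin N, φ j m * (starRingEnd ℂ) (φ k m) = if j = k then 1 else 0)
    (H : Matrix (Fin N) (Fin N) ℂ)
    (hH : ∀ m m' : Fin N,
      H m m' = ∑ j : Fin N, (lam j : ℂ) * φ j m * (starRingEnd ℂ) (φ j m'))
    (τ : ℝ) (m c : Fin N) :
    (NormedSpace.exp (((-Complex.I) * (τ : ℂ)) • H)) m c
      = ∑ j : Fin N, Complex.exp ((-Complex.I) * τ * lam j) * (φ j m * (starRingEnd ℂ) (φ j c)) := by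
  classical
  set V : Matrix (Fin N) (Fin N) ℂ := Matrix.of (fun m j => φ j m) with hVdef
  have hV : Vᴴ * V = 1 := by
    ext j k
    have h := horth k j
    simp only [Matrix.mul_apply, Matrix.conjTranspose_apply, Matrix.of_apply, Matrix.one_apply,
      hVdef]
    calc (∑ x : Fin N, (starRingEnd ℂ) (φ j x) * φ k x)
        = ∑ x : Fin N, φ k x * (starRingEnd ℂ) (φ j x) := by
          exact Finset.sum_congr rfl fun x _ => mul_comm _ _
      _ = if k = j then 1 else 0 := h
      _ = if j = k then 1 else 0 := by simp [eq_comm]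
  have hVV : V * Vᴴ = 1 := mul_eq_one_comm.mp hV
  have hVinv : V⁻¹ = Vᴴ := Matrix.inv_eq_right_inv hVV
  have hUnit : IsUnit V := ⟨⟨V, Vᴴ, hVV, hV⟩, rfl⟩
  have hsmul : ((-Complex.I) * (τ : ℂ)) • H
      = V * Matrix.diagonal (fun j => (-Complex.I) * τ * lam j) * Vᴴ := by
    ext a b
    simp only [Matrix.smul_apply, Matrix.mul_apply, Matrix.diagonal_apply, Matrix.of_apply,
      Matrix.conjTranspose_apply, hVdef, hH, Finset.mul_sum, smul_eq_mul, mul_ite, mul_zero,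
      ite_mul, zero_mul, Finset.sum_ite_eq, Finset.sum_ite_eq', Finset.mem_univ, if_true,
      RCLike.star_def]
    exact Finset.sum_congr rfl fun j _ => by ring
  rw [hsmul, ← hVinv, Matrix.exp_conj V _ hUnit, hVinv, Matrix.exp_diagonal]
  simp only [Matrix.mul_apply, Matrix.diagonal_apply, Matrix.of_apply, Matrix.conjTranspose_apply,
    hVdef, Pi.exp_def, mul_ite, mul_zero, ite_mul, zero_mul, Finset.sum_ite_eq,
    Finset.sum_ite_eq', Finset.mem_univ, if_true, RCLike.star_def, ← Complex.exp_eq_exp_ℂ]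
  exact Finset.sum_congr rfl fun j _ => by ring

lemma key_integral (N : ℕ) (lam : Fin N → ℝ) (a : Fin N → ℂ) (T : ℝ) :
    ((∫ τ in (0:ℝ)..T,
        ‖∑ j : Fin N, Complex.exp ((-Complex.I) * τ * lam j) * a j‖ ^ 2 : ℝ) : ℂ)
      = ∑ j : Fin N, ∑ k : Fin N, (a j * (starRingEnd ℂ) (a k)) *
          (if lam j = lam k then (T : ℂ)
           else (Complex.exp ((-Complex.I * ((lam j : ℂ) - lam k)) * T) - 1)
                  / (-Complex.I * ((lam j : ℂ) - lam k))) := by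
  classical
  have h1 : ∀ τ : ℝ,
      ((‖∑ j : Fin N, Complex.exp ((-Complex.I) * τ * lam j) * a j‖ ^ 2 : ℝ) : ℂ)
        = ∑ j : Fin N, ∑ k : Fin N,
            Complex.exp ((-Complex.I * ((lam j : ℂ) - lam k)) * τ)
              * (a j * (starRingEnd ℂ) (a k)) := by
    intro τ
    rw [Complex.sq_norm,
      show ((Complex.normSq (∑ j : Fin N, Complex.exp ((-Complex.I) * τ * lam j) * a j) : ℝ) : ℂ)
          = (∑ j : Fin N, Complex.exp ((-Complex.I) * τ * lam j) * a j)
            * (starRingEnd ℂ) (∑ j : Fin N, Complex.exp ((-Complex.I) * τ * lam j) * a j)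
        from (Complex.mul_conj _).symm,
      map_sum, Finset.sum_mul_sum]
    refine Finset.sum_congr rfl fun j _ => Finset.sum_congr rfl fun k _ => ?_
    rw [_root_.map_mul, ← Complex.exp_conj]
    have hc : (starRingEnd ℂ) ((-Complex.I) * τ * lam k) = Complex.I * τ * lam k := by
      simp [_root_.map_mul, Complex.conj_ofReal]
    rw [hc, mul_mul_mul_comm, ← Complex.exp_add]
    congr 2
    ring
  have hcont2 : ∀ j : Fin N, IntervalIntegrable
      (fun τ : ℝ => ∑ k : Fin N, Complex.exp ((-Complex.I * ((lam j : ℂ) - lam k)) * τ)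
        * (a j * (starRingEnd ℂ) (a k))) MeasureTheory.volume 0 T := by
    intro j
    refine (continuous_finset_sum _ fun k _ => ?_).intervalIntegrable _ _
    exact (Complex.continuous_exp.comp
      (continuous_const.mul Complex.continuous_ofReal)).mul continuous_const
  have hcont : ∀ (c w : ℂ),
      IntervalIntegrable (fun τ : ℝ => Complex.exp (c * τ) * w) MeasureTheory.volume 0 T :=
    fun c w => ((Complex.continuous_exp.comp
      (continuous_const.mul Complex.continuous_ofReal)).mul continuous_const).intervalIntegrable _ _
  rw [← intervalIntegral.integral_ofReal]
  simp only [h1]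
  rw [intervalIntegral.integral_finset_sum (fun j _ => hcont2 j)]
  refine Finset.sum_congr rfl fun j _ => ?_
  rw [intervalIntegral.integral_finset_sum (fun k _ => hcont _ _)]
  refine Finset.sum_congr rfl fun k _ => ?_
  rw [intervalIntegral.integral_mul_const]
  by_cases h : lam j = lam k
  · simp [h]; ring
  · have hc0 : (-Complex.I * ((lam j : ℂ) - lam k)) ≠ 0 := by
      refine mul_ne_zero (by simp [Complex.I_ne_zero]) ?_
      rw [← Complex.ofReal_sub]
      exact Complex.ofReal_ne_zero.mpr (sub_ne_zero.mpr h)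
    rw [integral_exp_mul_complex hc0]
    simp only [h, if_false, Complex.ofReal_zero, mul_zero, Complex.exp_zero]
    ring

/-- AAKV Lemma 4.3 (continuous-time version). Let `H = ∑_j λ_j |φ^{(j)}⟩⟨φ^{(j)}|` be a
Hermitian `N×N` matrix with orthonormal eigenbasis `{φ^{(j)}}` and real eigenvalues
`{λ_j}`, let `p_τ(m|c) = |⟨m|e^{-iHτ}|c⟩|²` and
`π(m|c) = ∑_{(j,k): λ_j = λ_k} φ^{(j)}_m (φ^{(j)}_c)* (φ^{(k)}_m)* φ^{(k)}_c`. Then for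
any `T > 0`,
`∑_m |(1/T)∫_0^T p_τ(m|c) dτ − π(m|c)| ≤ (2/T) ∑_{(j,k): λ_j ≠ λ_k} |φ^{(j)}_c|²/|λ_j − λ_k|`. -/
theorem stmt_12 (N : ℕ) (hN : 1 ≤ N)
    (lam : Fin N → ℝ) (φ : Fin N → Fin N → ℂ)
    (horth : ∀ j k : Fin N,
      ∑ m : Fin N, φ j m * (starRingEnd ℂ) (φ k m) = if j = k then 1 else 0)
    (H : Matrix (Fin N) (Fin N) ℂ)
    (hH : ∀ m m' : Fin N,
      H m m' = ∑ j : Fin N, (lam j : ℂ) * φ j m * (starRingEnd ℂ) (φ j m'))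
    (c : Fin N) (T : ℝ) (hT : 0 < T) :
    ∑ m : Fin N,
        ‖(((1 / T) * ∫ τ in (0 : ℝ)..T,
              ‖(NormedSpace.exp (((-Complex.I) * (τ : ℂ)) • H)) m c‖ ^ 2 : ℝ) : ℂ)
            - ∑ j : Fin N, ∑ k : Fin N,
                (if lam j = lam k
                  then φ j m * (starRingEnd ℂ) (φ j c) * (starRingEnd ℂ) (φ k m) * φ k c
                  else 0)‖
      ≤ (2 / T) * ∑ j : Fin N, ∑ k : Fin N,
          (if lam j ≠ lam k then ‖φ j c‖ ^ 2 / |lam j - lam k| else 0) := by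

  classical
  have hT0 : (T : ℂ) ≠ 0 := Complex.ofReal_ne_zero.mpr hT.ne'
  set A : Fin N → Fin N → ℂ := fun m j => φ j m * (starRingEnd ℂ) (φ j c) with hA
  have hint : ∀ m : Fin N,
      ((∫ τ in (0:ℝ)..T,
          ‖(NormedSpace.exp (((-Complex.I) * (τ : ℂ)) • H)) m c‖ ^ 2 : ℝ) : ℂ)
        = ∑ j : Fin N, ∑ k : Fin N, (A m j * (starRingEnd ℂ) (A m k)) *
            (if lam j = lam k then (T : ℂ)
             else (Complex.exp ((-Complex.I * ((lam j : ℂ) - lam k)) * T) - 1)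
                    / (-Complex.I * ((lam j : ℂ) - lam k))) := by
    intro m
    rw [show (∫ τ in (0:ℝ)..T,
          ‖(NormedSpace.exp (((-Complex.I) * (τ : ℂ)) • H)) m c‖ ^ 2)
        = ∫ τ in (0:ℝ)..T,
            ‖∑ j : Fin N, Complex.exp ((-Complex.I) * τ * lam j) * A m j‖ ^ 2 from by
      refine intervalIntegral.integral_congr fun τ _ => ?_
      rw [exp_entry_aux N lam φ horth H hH τ m c]]
    exact key_integral N lam (A m) T
  have hdiff : ∀ m : Fin N,
      (((1 / T) * ∫ τ in (0 : ℝ)..T,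
          ‖(NormedSpace.exp (((-Complex.I) * (τ : ℂ)) • H)) m c‖ ^ 2 : ℝ) : ℂ)
        - (∑ j : Fin N, ∑ k : Fin N,
            (if lam j = lam k
              then φ j m * (starRingEnd ℂ) (φ j c) * (starRingEnd ℂ) (φ k m) * φ k c
              else 0))
      = ∑ j : Fin N, ∑ k : Fin N,
          (if lam j = lam k then 0
           else (A m j * (starRingEnd ℂ) (A m k)) *
             ((Complex.exp ((-Complex.I * ((lam j : ℂ) - lam k)) * T) - 1)
               / ((-Complex.I * ((lam j : ℂ) - lam k)) * T))) := by
    intro m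
    rw [Complex.ofReal_mul, hint m, Finset.mul_sum, ← Finset.sum_sub_distrib]
    refine Finset.sum_congr rfl fun j _ => ?_
    rw [Finset.mul_sum, ← Finset.sum_sub_distrib]
    refine Finset.sum_congr rfl fun k _ => ?_
    by_cases h : lam j = lam k
    · simp only [h, if_true, hA, _root_.map_mul, Complex.conj_conj, Complex.ofReal_div,
        Complex.ofReal_one]
      field_simp
      ring
    · simp only [h, if_false, Complex.ofReal_div, Complex.ofReal_one, sub_zero]
      have hc0 : (-Complex.I * ((lam j : ℂ) - lam k)) ≠ 0 := by
        refine mul_ne_zero (by simp [Complex.I_ne_zero]) ?_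
        rw [← Complex.ofReal_sub]
        exact Complex.ofReal_ne_zero.mpr (sub_ne_zero.mpr h)
      field_simp
  -- bound on each modulus
  have habs2 : ∀ (j k : Fin N), lam j ≠ lam k → ∀ x : ℂ,
      ‖x * ((Complex.exp ((-Complex.I * ((lam j : ℂ) - lam k)) * T) - 1)
          / ((-Complex.I * ((lam j : ℂ) - lam k)) * T))‖
        ≤ ‖x‖ * (2 / (|lam j - lam k| * T)) := by
    intro j k h x
    have h2 : ‖(lam j : ℂ) - lam k‖ = |lam j - lam k| := by
      rw [← Complex.ofReal_sub, Complex.norm_real, Real.norm_eq_abs]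
    have h3 : ‖(T : ℂ)‖ = T := by rw [Complex.norm_real, Real.norm_eq_abs, abs_of_pos hT]
    have h4 : ‖Complex.exp ((-Complex.I * ((lam j : ℂ) - lam k)) * T) - 1‖ ≤ 2 := by
      have h5 : ‖Complex.exp ((-Complex.I * ((lam j : ℂ) - lam k)) * T)‖ = 1 := by
        rw [show (-Complex.I * ((lam j : ℂ) - lam k)) * T
            = ((-((lam j - lam k) * T) : ℝ) : ℂ) * Complex.I by push_cast; ring]
        exact Complex.norm_exp_ofReal_mul_I _
      calc ‖Complex.exp ((-Complex.I * ((lam j : ℂ) - lam k)) * T) - 1‖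
          ≤ ‖Complex.exp ((-Complex.I * ((lam j : ℂ) - lam k)) * T)‖
              + ‖(1:ℂ)‖ := by
            exact norm_sub_le _ _
        _ = 2 := by rw [h5]; norm_num
    rw [norm_mul, norm_div, norm_mul, norm_mul, h2, h3]
    have h6 : ‖-Complex.I‖ = 1 := by simp
    rw [h6, one_mul]
    have hD : 0 < |lam j - lam k| := abs_pos.mpr (sub_ne_zero.mpr h)
    gcongr
  -- norms
  have hnormsq : ∀ j : Fin N, ∑ m : Fin N, ‖φ j m‖ ^ 2 = 1 := by
    intro j
    have h := horth j j
    simp only [if_pos rfl] at h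
    have h2 : ((∑ m : Fin N, ‖φ j m‖ ^ 2 : ℝ) : ℂ) = 1 := by
      rw [Complex.ofReal_sum]
      rw [show (∑ m : Fin N, ((‖φ j m‖ ^ 2 : ℝ) : ℂ))
          = ∑ m : Fin N, φ j m * (starRingEnd ℂ) (φ j m) from
        Finset.sum_congr rfl fun m _ => by
          rw [Complex.sq_norm, Complex.mul_conj]]
      exact h
    exact_mod_cast h2
  have hCS : ∀ j k : Fin N,
      ∑ m : Fin N, ‖φ j m‖ * ‖φ k m‖ ≤ 1 := by
    intro j k
    have h := Finset.sum_mul_sq_le_sq_mul_sq Finset.univ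
      (fun m => ‖φ j m‖) (fun m => ‖φ k m‖)
    rw [hnormsq j, hnormsq k, one_mul] at h
    have hnn : (0:ℝ) ≤ ∑ m : Fin N, ‖φ j m‖ * ‖φ k m‖ :=
      Finset.sum_nonneg fun m _ => mul_nonneg (norm_nonneg _) (norm_nonneg _)
    nlinarith
  calc ∑ m : Fin N,
        ‖(((1 / T) * ∫ τ in (0 : ℝ)..T,
              ‖(NormedSpace.exp (((-Complex.I) * (τ : ℂ)) • H)) m c‖ ^ 2 : ℝ) : ℂ)
            - ∑ j : Fin N, ∑ k : Fin N,
                (if lam j = lam k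
                  then φ j m * (starRingEnd ℂ) (φ j c) * (starRingEnd ℂ) (φ k m) * φ k c
                  else 0)‖
      = ∑ m : Fin N, ‖∑ j : Fin N, ∑ k : Fin N,
          (if lam j = lam k then 0
           else (A m j * (starRingEnd ℂ) (A m k)) *
             ((Complex.exp ((-Complex.I * ((lam j : ℂ) - lam k)) * T) - 1)
               / ((-Complex.I * ((lam j : ℂ) - lam k)) * T)))‖ := by
        refine Finset.sum_congr rfl fun m _ => ?_
        rw [hdiff m]
    _ ≤ ∑ m : Fin N, ∑ j : Fin N, ∑ k : Fin N, ‖if lam j = lam k then 0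
           else (A m j * (starRingEnd ℂ) (A m k)) *
             ((Complex.exp ((-Complex.I * ((lam j : ℂ) - lam k)) * T) - 1)
               / ((-Complex.I * ((lam j : ℂ) - lam k)) * T))‖ := by
        refine Finset.sum_le_sum fun m _ => ?_
        refine (norm_sum_le _ _).trans (Finset.sum_le_sum fun j _ => ?_)
        exact norm_sum_le _ _
    _ = ∑ j : Fin N, ∑ k : Fin N, ∑ m : Fin N, ‖if lam j = lam k then 0
           else (A m j * (starRingEnd ℂ) (A m k)) *
             ((Complex.exp ((-Complex.I * ((lam j : ℂ) - lam k)) * T) - 1)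
               / ((-Complex.I * ((lam j : ℂ) - lam k)) * T))‖ := by
        rw [Finset.sum_comm]
        exact Finset.sum_congr rfl fun j _ => Finset.sum_comm
    _ ≤ ∑ j : Fin N, ∑ k : Fin N,
          (if lam j = lam k then 0
           else (2 / T) * ((‖φ j c‖ * ‖φ k c‖) / |lam j - lam k|)) := by
        refine Finset.sum_le_sum fun j _ => Finset.sum_le_sum fun k _ => ?_
        by_cases h : lam j = lam k
        · simp [h]
        · simp only [h, if_false]
          have hD : 0 < |lam j - lam k| := abs_pos.mpr (sub_ne_zero.mpr h)
          calc ∑ m : Fin N, ‖(A m j * (starRingEnd ℂ) (A m k)) *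
                  ((Complex.exp ((-Complex.I * ((lam j : ℂ) - lam k)) * T) - 1)
                    / ((-Complex.I * ((lam j : ℂ) - lam k)) * T))‖
              ≤ ∑ m : Fin N, ‖A m j * (starRingEnd ℂ) (A m k)‖
                  * (2 / (|lam j - lam k| * T)) :=
                Finset.sum_le_sum fun m _ => habs2 j k h _
            _ = (∑ m : Fin N, ‖φ j m‖ * ‖φ k m‖)
                  * (‖φ j c‖ * ‖φ k c‖ * (2 / (|lam j - lam k| * T))) := by
                rw [Finset.sum_mul]
                refine Finset.sum_congr rfl fun m _ => ?_
                simp only [hA, norm_mul, Complex.norm_conj]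
                ring
            _ ≤ 1 * (‖φ j c‖ * ‖φ k c‖
                  * (2 / (|lam j - lam k| * T))) := by
                have := hCS j k
                gcongr
            _ = (2 / T) * ((‖φ j c‖ * ‖φ k c‖) / |lam j - lam k|) := by
                rw [one_mul]
                field_simp
    _ ≤ (2 / T) * ∑ j : Fin N, ∑ k : Fin N,
          (if lam j ≠ lam k then ‖φ j c‖ ^ 2 / |lam j - lam k| else 0) := by
        have key : ∀ j k : Fin N,
            (if lam j = lam k then 0
             else (2 / T) * ((‖φ j c‖ * ‖φ k c‖) / |lam j - lam k|))
            ≤ ((if lam j ≠ lam k then (2 / T) * (‖φ j c‖ ^ 2 / |lam j - lam k|) else 0)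
              + (if lam k ≠ lam j then (2 / T) * (‖φ k c‖ ^ 2 / |lam k - lam j|) else 0))
              / 2 := by
          intro j k
          by_cases h : lam j = lam k
          · simp [h]
          · have h' : lam k ≠ lam j := fun hh => h hh.symm
            simp only [h, h', if_false, ne_eq, not_false_eq_true, if_true]
            have hD : 0 < |lam j - lam k| := abs_pos.mpr (sub_ne_zero.mpr h)
            rw [abs_sub_comm (lam k) (lam j)]
            have ha : 0 ≤ ‖φ j c‖ := norm_nonneg _
            have hb : 0 ≤ ‖φ k c‖ := norm_nonneg _
            have h1 : ‖φ j c‖ * ‖φ k c‖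
                ≤ (‖φ j c‖ ^ 2 + ‖φ k c‖ ^ 2) / 2 := by
              nlinarith [sq_nonneg (‖φ j c‖ - ‖φ k c‖)]
            calc (2 / T) * ((‖φ j c‖ * ‖φ k c‖) / |lam j - lam k|)
                ≤ (2 / T) * (((‖φ j c‖ ^ 2 + ‖φ k c‖ ^ 2) / 2)
                    / |lam j - lam k|) := by gcongr
              _ = ((2 / T) * (‖φ j c‖ ^ 2 / |lam j - lam k|)
                    + (2 / T) * (‖φ k c‖ ^ 2 / |lam j - lam k|)) / 2 := by
                  field_simp
        calc ∑ j : Fin N, ∑ k : Fin N,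
              (if lam j = lam k then 0
               else (2 / T) * ((‖φ j c‖ * ‖φ k c‖) / |lam j - lam k|))
            ≤ ∑ j : Fin N, ∑ k : Fin N,
              (((if lam j ≠ lam k then (2 / T) * (‖φ j c‖ ^ 2 / |lam j - lam k|) else 0)
                + (if lam k ≠ lam j then (2 / T) * (‖φ k c‖ ^ 2 / |lam k - lam j|)
                    else 0)) / 2) :=
              Finset.sum_le_sum fun j _ => Finset.sum_le_sum fun k _ => key j k
          _ = (2 / T) * ∑ j : Fin N, ∑ k : Fin N,
              (if lam j ≠ lam k then ‖φ j c‖ ^ 2 / |lam j - lam k| else 0) := by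
              simp only [add_div, Finset.sum_add_distrib]
              rw [show (∑ j : Fin N, ∑ k : Fin N,
                  ((if lam k ≠ lam j then (2 / T) * (‖φ k c‖ ^ 2 / |lam k - lam j|)
                    else 0) / 2))
                = ∑ j : Fin N, ∑ k : Fin N,
                  ((if lam j ≠ lam k then (2 / T) * (‖φ j c‖ ^ 2 / |lam j - lam k|)
                    else 0) / 2) from Finset.sum_comm]
              simp only [← Finset.sum_div]
              rw [add_halves, Finset.mul_sum]
              refine Finset.sum_congr rfl fun j _ => ?_
              rw [Finset.mul_sum]
              exact Finset.sum_congr rfl fun k _ => by rw [mul_ite, mul_zero]
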